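/- Let M_n(x) = Σ_{i=0}^n C(n,i)^2 x^{2i} and A_n(x,y) = M_n(√(xy)) / (√(M_n(x)) √(M_n(y))). For real numbers 0 < x < y, setting ε_{1,n}(x,y) = Σ_{i=0}^n C(n,i)^2 x^i (y^i − x^i)/(y − x) and ε̃_{1,n}(x,y) = Σ_{i=0}^n C(n,i)^2 ((y^i − x^i)/(y − x))^2, one has 0 ≤ 1 − A_n(x,y) ≤ (y − x)^2 · (M_n(x) ε̃_{1,n}(x,y) − ε_{1,n}(x,y)^2) / M_n(x)^2. -/

import Mathlib

open Real

/-- `M_n(x) = Σ_{i=0}^n C(n,i)^2 x^{2i}`. -/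
noncomputable def Mpoly (n : ℕ) (x : ℝ) : ℝ :=
  ∑ i ∈ Finset.range (n + 1), (n.choose i : ℝ) ^ 2 * x ^ (2 * i)

/-- The autocorrelation `A_n(x,y) = M_n(√(xy))/(√(M_n(x)) √(M_n(y)))`. -/
noncomputable def Acorr (n : ℕ) (x y : ℝ) : ℝ :=
  Mpoly n (Real.sqrt (x * y)) / (Real.sqrt (Mpoly n x) * Real.sqrt (Mpoly n y))

/-- for `0 < x < y`,
`0 ≤ 1 - A_n(x,y) ≤ (y-x)^2 (M_n(x) ε̃_{1,n}(x,y) - ε_{1,n}(x,y)^2)/M_n(x)^2`. -/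
theorem stmt_14 (n : ℕ) (x y : ℝ) (hx : 0 < x) (hxy : x < y) :
    0 ≤ 1 - Acorr n x y ∧
      1 - Acorr n x y ≤
        (y - x) ^ 2 *
          (Mpoly n x *
              (∑ i ∈ Finset.range (n + 1),
                (n.choose i : ℝ) ^ 2 * ((y ^ i - x ^ i) / (y - x)) ^ 2) -
            (∑ i ∈ Finset.range (n + 1),
                (n.choose i : ℝ) ^ 2 * x ^ i * ((y ^ i - x ^ i) / (y - x))) ^ 2) /
          Mpoly n x ^ 2 := by
  have hy : 0 < y := hx.trans hxy
  have hne : y - x ≠ 0 := by linarith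
  set S := Finset.range (n + 1)
  set P := Mpoly n x with hPdef
  set Q := Mpoly n y with hQdef
  set c := Mpoly n (Real.sqrt (x * y)) with hcdef
  set E1 := ∑ i ∈ S, (n.choose i : ℝ) ^ 2 * x ^ i * ((y ^ i - x ^ i) / (y - x)) with hE1
  set E2 := ∑ i ∈ S, (n.choose i : ℝ) ^ 2 * ((y ^ i - x ^ i) / (y - x)) ^ 2 with hE2
  have hcsum : c = ∑ i ∈ S, (n.choose i : ℝ) ^ 2 * (x ^ i * y ^ i) := by
    rw [hcdef, Mpoly]
    refine Finset.sum_congr rfl fun i _ => ?_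
    rw [pow_mul, Real.sq_sqrt (by positivity), mul_pow]
  have hPsum : P = ∑ i ∈ S, (n.choose i : ℝ) ^ 2 * (x ^ i * x ^ i) := by
    rw [hPdef, Mpoly]
    refine Finset.sum_congr rfl fun i _ => ?_
    rw [two_mul, pow_add]
  have hQsum : Q = ∑ i ∈ S, (n.choose i : ℝ) ^ 2 * (y ^ i * y ^ i) := by
    rw [hQdef, Mpoly]
    refine Finset.sum_congr rfl fun i _ => ?_
    rw [two_mul, pow_add]
  have hP1 : (1 : ℝ) ≤ P := by
    rw [hPdef, Mpoly]
    calc (1:ℝ) = (n.choose 0 : ℝ) ^ 2 * x ^ (2 * 0) := by simp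
    _ ≤ _ := Finset.single_le_sum (f := fun i => (n.choose i : ℝ) ^ 2 * x ^ (2 * i))
        (fun i _ => by positivity) (by simp [S])
  have hP0 : 0 < P := by linarith
  have hPQ : P ≤ Q := by
    rw [hPsum, hQsum]
    refine Finset.sum_le_sum fun i _ => ?_
    have h1 : x ^ i ≤ y ^ i := pow_le_pow_left₀ hx.le hxy.le i
    have hxi : 0 ≤ x ^ i := by positivity
    have hyi : 0 ≤ y ^ i := by positivity
    exact mul_le_mul_of_nonneg_left (mul_le_mul h1 h1 hxi hyi) (by positivity)
  have hPc : P ≤ c := by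
    rw [hPsum, hcsum]
    refine Finset.sum_le_sum fun i _ => ?_
    have h1 : x ^ i ≤ y ^ i := pow_le_pow_left₀ hx.le hxy.le i
    have hxi : 0 ≤ x ^ i := by positivity
    exact mul_le_mul_of_nonneg_left (mul_le_mul_of_nonneg_left h1 hxi) (by positivity)
  have hc0 : 0 < c := by linarith
  have hcs : c ^ 2 ≤ P * Q := by
    have h := Finset.sum_mul_sq_le_sq_mul_sq S
      (fun i => (n.choose i : ℝ) * x ^ i) (fun i => (n.choose i : ℝ) * y ^ i)
    have e1 : ∑ i ∈ S, ((n.choose i : ℝ) * x ^ i) * ((n.choose i : ℝ) * y ^ i) = c := by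
      rw [hcsum]; exact Finset.sum_congr rfl fun i _ => by ring
    have e2 : ∑ i ∈ S, ((n.choose i : ℝ) * x ^ i) ^ 2 = P := by
      rw [hPsum]; exact Finset.sum_congr rfl fun i _ => by ring
    have e3 : ∑ i ∈ S, ((n.choose i : ℝ) * y ^ i) ^ 2 = Q := by
      rw [hQsum]; exact Finset.sum_congr rfl fun i _ => by ring
    simpa only [e1, e2, e3] using h
  -- algebraic identities
  have hI1 : E1 * (y - x) = c - P := by
    rw [hE1, Finset.sum_mul, hcsum, hPsum, ← Finset.sum_sub_distrib]
    refine Finset.sum_congr rfl fun i _ => ?_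
    field_simp
  have hI2 : E2 * (y - x) ^ 2 = Q - 2 * c + P := by
    have hrhs : Q - 2 * c + P = ∑ i ∈ S, (n.choose i : ℝ) ^ 2 * (y ^ i - x ^ i) ^ 2 := by
      rw [hQsum, hcsum, hPsum, Finset.mul_sum, ← Finset.sum_sub_distrib,
        ← Finset.sum_add_distrib]
      exact Finset.sum_congr rfl fun i _ => by ring
    rw [hE2, Finset.sum_mul, hrhs]
    refine Finset.sum_congr rfl fun i _ => ?_
    field_simp
  have hkey : (y - x) ^ 2 * (P * E2 - E1 ^ 2) = P * Q - c ^ 2 := by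
    have h1 := hI1
    have h2 := hI2
    nlinarith [h1, h2]
  set sP := Real.sqrt P with hsP
  set sQ := Real.sqrt Q with hsQ
  have hsP0 : 0 < sP := Real.sqrt_pos.mpr hP0
  have hsQ0 : 0 < sQ := Real.sqrt_pos.mpr (by linarith)
  have hsP2 : sP ^ 2 = P := Real.sq_sqrt hP0.le
  have hsQ2 : sQ ^ 2 = Q := Real.sq_sqrt (by linarith)
  have hcle : c ≤ sP * sQ := by
    have h := Real.sqrt_le_sqrt hcs
    rwa [Real.sqrt_sq hc0.le, Real.sqrt_mul hP0.le, ← hsP, ← hsQ] at h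
  have hA : Acorr n x y = c / (sP * sQ) := rfl
  clear_value E1 E2 sP sQ P Q c
  constructor
  · rw [hA]
    have : c / (sP * sQ) ≤ 1 := by
      rw [div_le_one (by positivity)]; exact hcle
    linarith
  · rw [hA, hkey]
    have h1 : 1 - c / (sP * sQ) = (sP * sQ - c) / (sP * sQ) := by
      field_simp
    rw [h1, div_le_div_iff₀ (by positivity) (by positivity)]
    have hs2 : (sP * sQ) ^ 2 = P * Q := by rw [mul_pow, hsP2, hsQ2]
    have hdiff : 0 ≤ sP * sQ - c := sub_nonneg.mpr hcle
    have hle1 : P ^ 2 ≤ (sP * sQ) * (sP * sQ + c) := by nlinarith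
    calc (sP * sQ - c) * P ^ 2
        ≤ (sP * sQ - c) * ((sP * sQ) * (sP * sQ + c)) :=
          mul_le_mul_of_nonneg_left hle1 hdiff
      _ = (P * Q - c ^ 2) * (sP * sQ) := by rw [← hs2]; ring
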